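/- Let G be a graph with designated undeletable edges, and let G' be obtained from G by adding, for each undeletable edge uv, N+2 pairwise non-adjacent new vertices each adjacent exactly to u and v. If F is a set of edges of G containing no undeletable edge and G - F is C4-free, then G' - F is C4-free. -/

import Mathlib

/-- The cycle on 4 vertices. -/
def C4 : SimpleGraph (Fin 4) :=
  SimpleGraph.fromEdgeSet {s(0,1), s(1,2), s(2,3), s(3,0)}

/-- The graph `G'` obtained from `G` by adding, for each undeletable edge `uv`
(edge in the set `U`), `M` pairwise non-adjacent new vertices, each adjacent
exactly to `u` and `v`. -/
def addWitnesses {V : Type*} (G : SimpleGraph V) (U : Set (Sym2 V)) (M : ℕ) :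
    SimpleGraph (V ⊕ ({p : V × V // G.Adj p.1 p.2 ∧ s(p.1, p.2) ∈ U} × Fin M)) :=
  SimpleGraph.fromRel (fun x y =>
    match x, y with
    | Sum.inl a, Sum.inl b => G.Adj a b
    | Sum.inl a, Sum.inr (e, _) => a = e.1.1 ∨ a = e.1.2
    | _, _ => False)

/-- If `G'` is obtained from `G` by adding `N + 2` new vertices adjacent exactly
to `u` and `v` for each undeletable edge `uv`, and `F` is a set of edges of `G`
containing no undeletable edge such that `G - F` is `C4`-free, then `G' - F` is
`C4`-free. -/
theorem deletion_lifts_to_gadget_graph {V : Type*} (G : SimpleGraph V)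
    (U : Set (Sym2 V)) (hU : U ⊆ G.edgeSet) (N : ℕ)
    (F : Set (Sym2 V)) (hFsub : F ⊆ G.edgeSet) (hFU : ∀ e ∈ F, e ∉ U)
    (hfree : IsEmpty (C4 ↪g G.deleteEdges F)) :
    IsEmpty (C4 ↪g (addWitnesses G U (N + 2)).deleteEdges (Sym2.map Sum.inl '' F)) := by
  constructor
  intro f
  set H := (addWitnesses G U (N + 2)).deleteEdges (Sym2.map Sum.inl '' F) with hHdef
  have himg : ∀ a b : V, s((Sum.inl a : V ⊕ ({p : V × V // G.Adj p.1 p.2 ∧ s(p.1, p.2) ∈ U} × Fin (N+2))), Sum.inl b) ∈ Sym2.map Sum.inl '' F ↔ s(a,b) ∈ F := by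
    intro a b
    constructor
    · rintro ⟨e, he, heq⟩
      have : e = s(a, b) := by
        apply Sym2.map.injective Sum.inl_injective
        simpa using heq
      rwa [this] at he
    · intro h
      exact ⟨s(a,b), h, by simp⟩
  have hinl : ∀ a b : V, H.Adj (Sum.inl a) (Sum.inl b) ↔ (G.deleteEdges F).Adj a b := by
    intro a b
    rw [hHdef]
    simp only [SimpleGraph.deleteEdges_adj, addWitnesses, SimpleGraph.fromRel_adj, himg]
    constructor
    · rintro ⟨⟨hne, h | h⟩, hF⟩
      · exact ⟨h, hF⟩
      · exact ⟨h.symm, hF⟩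
    · rintro ⟨h, hF⟩
      exact ⟨⟨by simpa using h.ne, Or.inl h⟩, hF⟩
  have hinr : ∀ (a : V) w, H.Adj (Sum.inl a) (Sum.inr w) → a = w.1.1.1 ∨ a = w.1.1.2 := by
    rintro a ⟨e, k⟩ h
    rw [hHdef] at h
    rw [SimpleGraph.deleteEdges_adj] at h
    have := h.1
    rw [addWitnesses, SimpleGraph.fromRel_adj] at this
    rcases this.2 with h' | h'
    · exact h'
    · exact h'.elim
  have hinr2 : ∀ w w', ¬ H.Adj (Sum.inr w) (Sum.inr w') := by
    rintro ⟨e, k⟩ ⟨e', k'⟩ h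
    rw [hHdef, SimpleGraph.deleteEdges_adj] at h
    have := h.1
    rw [addWitnesses, SimpleGraph.fromRel_adj] at this
    rcases this.2 with h' | h' <;> exact h'
  by_cases hall : ∀ i, ∃ a, f i = Sum.inl a
  · choose g hg using hall
    refine hfree.false ⟨⟨g, ?_⟩, ?_⟩
    · intro i j h
      apply f.injective
      rw [hg, hg, h]
    · intro i j
      show (G.deleteEdges F).Adj (g i) (g j) ↔ C4.Adj i j
      rw [← hinl, ← hg, ← hg]
      exact f.map_adj_iff
  · push_neg at hall
    obtain ⟨i, hi⟩ := hall
    obtain ⟨w, hw⟩ : ∃ w, f i = Sum.inr w := by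
      cases h : f i with
      | inl a => exact absurd h (hi a)
      | inr w => exact ⟨w, rfl⟩
    have hC1 : C4.Adj (i+1) i := by
      fin_cases i <;> · (rw [C4, SimpleGraph.fromEdgeSet_adj]; simp; try decide)
    have hC3 : C4.Adj (i+3) i := by
      fin_cases i <;> · (rw [C4, SimpleGraph.fromEdgeSet_adj]; simp; try decide)
    have hC13 : ¬ C4.Adj (i+1) (i+3) := by
      fin_cases i <;> · (rw [C4, SimpleGraph.fromEdgeSet_adj]; simp; try decide)
    have h1 : H.Adj (f (i+1)) (f i) := f.map_adj_iff.mpr hC1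
    have h3 : H.Adj (f (i+3)) (f i) := f.map_adj_iff.mpr hC3
    rw [hw] at h1 h3
    obtain ⟨a, ha⟩ : ∃ a, f (i+1) = Sum.inl a := by
      cases h : f (i+1) with
      | inl a => exact ⟨a, rfl⟩
      | inr w' => rw [h] at h1; exact absurd h1 (hinr2 w' w)
    obtain ⟨b, hb⟩ : ∃ b, f (i+3) = Sum.inl b := by
      cases h : f (i+3) with
      | inl b => exact ⟨b, rfl⟩
      | inr w' => rw [h] at h3; exact absurd h3 (hinr2 w' w)
    rw [ha] at h1
    rw [hb] at h3
    have hane : a ≠ b := by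
      intro h
      have : f (i+1) = f (i+3) := by rw [ha, hb, h]
      have := f.injective this
      fin_cases i <;> simp_all <;> omega
    have hG : G.Adj (w.1 : V × V).1 (w.1 : V × V).2 := w.1.2.1
    have hUm : s((w.1 : V × V).1, (w.1 : V × V).2) ∈ U := w.1.2.2
    have hFm : s((w.1 : V × V).1, (w.1 : V × V).2) ∉ F := fun hf => hFU _ hf hUm
    apply hC13
    rw [← f.map_adj_iff, ha, hb, hinl, SimpleGraph.deleteEdges_adj]
    rcases hinr a w h1 with rfl | rfl <;> rcases hinr b w h3 with rfl | rfl
    · exact absurd rfl hane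
    · exact ⟨hG, hFm⟩
    · exact ⟨hG.symm, by rwa [Sym2.eq_swap]⟩
    · exact absurd rfl hane
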